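/- arXiv:2007.11640 — 3 statements merged into one kernel-verified Lean document; each statement's English description precedes it below -/
import Mathlib

section
/- If B is a finite-dimensional algebra over a field k and J ⊆ B is a two-sided ideal, then every idempotent of B/J lifts to an idempotent of B. -/
open Polynomial

/-- In a commutative Artinian ring, idempotents lift modulo any ideal, in the strong
form: for any `x`, there is an idempotent `f` with `f - x` a multiple of `x*x - x`. -/
lemma comm_artinian_idem_lift {A : Type*} [CommRing A] [IsArtinianRing A] (x : A) :
    ∃ f t : A, f * f = f ∧ f - x = (x * x - x) * t := by
  obtain ⟨a, ha⟩ : ∃ a : A, x * x - x = a := ⟨_, rfl⟩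
  rw [ha]
  obtain ⟨n, c, hc⟩ := IsArtinian.exists_pow_succ_smul_dvd a (1 : A)
  rw [smul_eq_mul, smul_eq_mul, mul_one] at hc
  simp only [Nat.succ_eq_add_one] at hc
  -- hc : a ^ (n+1) * c = a ^ n
  have hN : a ^ (n + 1 + 1) * c = a ^ (n + 1) := by
    linear_combination a * hc
  have key : ∀ j, a ^ (n + 1) * (a * c) ^ j = a ^ (n + 1) := by
    intro j
    induction j with
    | zero => simp
    | succ j ih => linear_combination ((a * c) ^ j) * hN + ih
  set g : A := (a * c) ^ (n + 1) with hgdef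
  have hg : g * g = g := by
    rw [hgdef]
    linear_combination (c ^ (n + 1)) * key (n + 1)
  have hag : a ^ (n + 1) * g = a ^ (n + 1) := key (n + 1)
  -- Newton iteration
  set E : ℕ → A := fun m => (fun y => 3 * y ^ 2 - 2 * y ^ 3)^[m] x with hE
  have hE0 : E 0 = x := rfl
  have hEs : ∀ m, E (m + 1) = 3 * (E m) ^ 2 - 2 * (E m) ^ 3 := fun m =>
    Function.iterate_succ_apply' _ m x
  have claims : ∀ m, a ∣ E m - x ∧ a ^ (2 ^ m) ∣ (E m * E m - E m) := by
    intro m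
    induction m with
    | zero =>
      constructor
      · rw [hE0, sub_self]; exact dvd_zero a
      · rw [hE0, pow_zero, pow_one, ha]
    | succ m ih =>
      obtain ⟨⟨t, ht⟩, ⟨s, hs⟩⟩ := ih
      have hdvd2 : a ^ (2 ^ (m + 1)) ∣ (E (m + 1) * E (m + 1) - E (m + 1)) := by
        have h1 : E (m + 1) * E (m + 1) - E (m + 1)
            = (E m * E m - E m) ^ 2 * (4 * (E m) ^ 2 - 4 * E m - 3) := by
          rw [hEs]; ring
        rw [h1]
        have h2 : a ^ (2 ^ (m + 1)) = (a ^ (2 ^ m)) ^ 2 := by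
          rw [← pow_mul, pow_succ]
        rw [h2]
        exact Dvd.dvd.mul_right (pow_dvd_pow_of_dvd ⟨s, hs⟩ 2) _
      refine ⟨?_, hdvd2⟩
      have h3 : E (m + 1) - x = (E (m + 1) - E m) + (E m - x) := by ring
      rw [h3]
      refine dvd_add ?_ ⟨t, ht⟩
      have h4 : E (m + 1) - E m = -(E m * E m - E m) * (2 * E m - 1) := by
        rw [hEs]; ring
      rw [h4]
      have h5 : a ∣ E m * E m - E m :=
        dvd_trans (dvd_pow_self a (by positivity : 0 < 2 ^ m).ne') ⟨s, hs⟩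
      exact Dvd.dvd.mul_right (dvd_neg.mpr h5) _
  obtain ⟨⟨t, ht⟩, h2⟩ := claims (n + 1)
  have hdvd : a ^ (n + 1) ∣ (E (n + 1) * E (n + 1) - E (n + 1)) :=
    dvd_trans (pow_dvd_pow a (Nat.lt_two_pow_self (n := n + 1)).le) h2
  obtain ⟨w, hw⟩ := hdvd
  set u : A := E (n + 1) with hu
  refine ⟨u * (1 - g), t - u * (c * (a * c) ^ n), ?_, ?_⟩
  · linear_combination (1 - g) * hw + (u * u) * hg - w * hag
  · rw [hgdef, pow_succ]
    linear_combination ht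

/-- In a finite-dimensional algebra B over a field k, every idempotent
of B/J (for J a two-sided ideal) lifts to an idempotent of B. -/
theorem idempotent_lifts
    (k : Type*) [Field k] (B : Type*) [Ring B] [Algebra k B]
    [FiniteDimensional k B] (J : TwoSidedIdeal B)
    (e : B) (he : e * e - e ∈ J) :
    ∃ f : B, f * f = f ∧ f - e ∈ J := by
  letI S : Subalgebra k B := Algebra.adjoin k {e}
  letI : CommRing S := Algebra.adjoinCommRingOfComm k (by
    rintro a ha b hb
    rw [Set.mem_singleton_iff] at ha hb
    rw [ha, hb])
  haveI : FiniteDimensional k S := FiniteDimensional.finiteDimensional_submodule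
    (Subalgebra.toSubmodule S)
  haveI : IsArtinianRing S := isArtinian_of_tower k inferInstance
  set x : S := ⟨e, Algebra.self_mem_adjoin_singleton k e⟩ with hx
  obtain ⟨f, t, hf, hft⟩ := comm_artinian_idem_lift x
  refine ⟨(f : B), ?_, ?_⟩
  · have := congrArg (Subalgebra.val S) hf
    simpa using this
  · have := congrArg (Subalgebra.val S) hft
    simp only [map_sub, map_mul] at this
    rw [show (Subalgebra.val S) x = e from rfl] at this
    show S.val f - e ∈ J
    rw [this]
    exact J.mul_mem_right _ _ he
end

section
/- If the generating function of (αₙ) over a field k is rational with denominator of degree M, then the span of all shifts of the sequence α in k^ℕ is finite-dimensional of dimension at most max(deg P + 1, M). -/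
open PowerSeries

/-- The m-th shift of a sequence. -/
def shiftSeq {k : Type*} (α : ℕ → k) (m : ℕ) : ℕ → k := fun n => α (m + n)

/-- if the generating function of α is rational P/Q with P,Q coprime,
Q(0) ≠ 0 and deg Q = M, then the span of all shifts of α is finite-dimensional of
dimension at most max(deg P + 1, M). -/
theorem span_of_shifts_finite_dimensional
    (k : Type*) [Field k] (α : ℕ → k) (P Q : Polynomial k) (M : ℕ)
    (hcop : IsCoprime P Q) (hQ0 : Polynomial.eval 0 Q ≠ 0) (hM : Q.natDegree = M)
    (hser : (Q : PowerSeries k) * PowerSeries.mk α = (P : PowerSeries k)) :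
    FiniteDimensional k
        (Submodule.span k (Set.range (shiftSeq α)) : Submodule k (ℕ → k)) ∧
      Module.finrank k
        (Submodule.span k (Set.range (shiftSeq α)) : Submodule k (ℕ → k)) ≤
          max (P.natDegree + 1) M := by
  classical
  set N := max (P.natDegree + 1) M with hN
  have hq0 : Q.coeff 0 ≠ 0 := by
    simpa [Polynomial.eval_zero, Polynomial.coeff_zero_eq_eval_zero] using hQ0
  -- the linear recurrence
  have hrec : ∀ n, N ≤ n →
      α n = -(Q.coeff 0)⁻¹ * ∑ i ∈ Finset.Icc 1 M, Q.coeff i * α (n - i) := by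
    intro n hn
    have hMn : M ≤ n := le_trans (le_max_right _ _) hn
    have h1 : (PowerSeries.coeff n) ((Q : PowerSeries k) * PowerSeries.mk α)
        = (PowerSeries.coeff n) (P : PowerSeries k) := by rw [hser]
    have hPn : P.coeff n = 0 :=
      Polynomial.coeff_eq_zero_of_natDegree_lt
        (lt_of_lt_of_le (Nat.lt_succ_self _) (le_trans (le_max_left _ _) hn))
    rw [PowerSeries.coeff_mul, Polynomial.coeff_coe] at h1
    have h2 : ∑ p ∈ Finset.HasAntidiagonal.antidiagonal n, Q.coeff p.1 * α p.2 = 0 := by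
      simpa [Polynomial.coeff_coe, PowerSeries.coeff_mk, hPn] using h1
    rw [Finset.Nat.sum_antidiagonal_eq_sum_range_succ_mk] at h2
    have h3 : ∑ i ∈ Finset.range (M + 1), Q.coeff i * α (n - i) = 0 := by
      rw [← h2]
      apply Finset.sum_subset
      · exact Finset.range_subset_range.2 (by omega)
      · intro i hi hi'
        have : M < i := by simp only [Finset.mem_range] at hi hi'; omega
        rw [Polynomial.coeff_eq_zero_of_natDegree_lt (hM ▸ this), zero_mul]
    have hins : Finset.range (M + 1) = insert 0 (Finset.Icc 1 M) := by
      ext i; simp [Finset.mem_range, Finset.mem_Icc]; omega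
    rw [hins, Finset.sum_insert (by simp)] at h3
    simp only [Nat.sub_zero] at h3
    field_simp
    linear_combination h3
  -- the finite spanning set
  set S : Finset (ℕ → k) := (Finset.range N).image (shiftSeq α) with hS
  have hmem : ∀ m, shiftSeq α m ∈ Submodule.span k (S : Set (ℕ → k)) := by
    intro m
    induction m using Nat.strong_induction_on with
    | _ m ih =>
      by_cases hm : m < N
      · exact Submodule.subset_span (by
          simp only [hS, Finset.coe_image, Set.mem_image, Finset.mem_coe,
            Finset.mem_range]
          exact ⟨m, hm, rfl⟩)
      · push_neg at hm
        have hm1 : 1 ≤ m := le_trans (le_trans (by omega) (le_max_left _ _)) hm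
        have heq : shiftSeq α m
            = ∑ i ∈ Finset.Icc 1 M, (-(Q.coeff 0)⁻¹ * Q.coeff i) • shiftSeq α (m - i) := by
          funext n
          have hrn := hrec (m + n) (le_trans hm (Nat.le_add_right _ _))
          simp only [shiftSeq, Finset.sum_apply, Pi.smul_apply, smul_eq_mul]
          rw [hrn, Finset.mul_sum]
          apply Finset.sum_congr rfl
          intro i hi
          simp only [Finset.mem_Icc] at hi
          have hiM : i ≤ m := le_trans (le_trans hi.2 (le_max_right _ _)) hm
          have : m + n - i = m - i + n := by omega
          ring_nf
          rw [this]
          ring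
        rw [heq]
        apply Submodule.sum_mem
        intro i hi
        simp only [Finset.mem_Icc] at hi
        exact Submodule.smul_mem _ _ (ih (m - i) (by omega))
  have hle : Submodule.span k (Set.range (shiftSeq α))
      ≤ Submodule.span k (S : Set (ℕ → k)) := by
    rw [Submodule.span_le]
    rintro _ ⟨m, rfl⟩
    exact hmem m
  have hfd : FiniteDimensional k (Submodule.span k (S : Set (ℕ → k))) :=
    FiniteDimensional.span_finset k S
  refine ⟨Submodule.finiteDimensional_of_le hle, ?_⟩
  calc Module.finrank k (Submodule.span k (Set.range (shiftSeq α)))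
      ≤ Module.finrank k (Submodule.span k (S : Set (ℕ → k))) :=
        Submodule.finrank_mono hle
    _ ≤ S.card := finrank_span_finset_le_card S
    _ ≤ (Finset.range N).card := Finset.card_image_le
    _ = N := Finset.card_range N
end

section
/- Conversely, if the span of all shifts of a sequence (αₙ) in k^ℕ is finite-dimensional, then the generating function Σ αₙ Tⁿ is rational, i.e., there exists a nonzero polynomial Q with Q(T)·Σ αₙTⁿ a polynomial. -/
open PowerSeries

/-- if the span of all shifts of α in k^ℕ is finite-dimensional, then
the generating function Σ αₙTⁿ is rational: some nonzero polynomial Q multiplies it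
into a polynomial. -/
theorem rational_of_span_of_shifts_finite_dimensional
    (k : Type*) [Field k] (α : ℕ → k)
    (hfin : FiniteDimensional k
      (Submodule.span k (Set.range (shiftSeq α)) : Submodule k (ℕ → k))) :
    ∃ Q : Polynomial k, Q ≠ 0 ∧
      ∃ P : Polynomial k,
        (Q : PowerSeries k) * PowerSeries.mk α = (P : PowerSeries k) := by
  set V := Submodule.span k (Set.range (shiftSeq α)) with hV
  have hmem : ∀ i, shiftSeq α i ∈ V := fun i => Submodule.subset_span ⟨i, rfl⟩
  have hnli : ¬ LinearIndependent k (shiftSeq α) := by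
    intro h
    have h' : LinearIndependent k (fun i => (⟨shiftSeq α i, hmem i⟩ : V)) := by
      apply LinearIndependent.of_comp V.subtype
      exact h
    exact Module.Finite.not_linearIndependent_of_infinite _ h'
  obtain ⟨s, g, hsum, i₀, hi₀s, hgi₀⟩ := not_linearIndependent_iff.mp hnli
  -- the recurrence: ∀ n, ∑ i in s, g i * α (i + n) = 0
  have hrec : ∀ n, ∑ i ∈ s, g i * α (i + n) = 0 := by
    intro n
    have := congrFun hsum n
    simpa [shiftSeq, Finset.sum_apply] using this
  set N := s.max' ⟨i₀, hi₀s⟩ with hN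
  have hle : ∀ i ∈ s, i ≤ N := fun i hi => s.le_max' i hi
  set Q : Polynomial k := ∑ i ∈ s, Polynomial.C (g i) * Polynomial.X ^ (N - i) with hQ
  refine ⟨Q, ?_, ?_⟩
  · intro h0
    apply hgi₀
    have : Q.coeff (N - i₀) = g i₀ := by
      rw [hQ, Polynomial.finset_sum_coeff]
      rw [Finset.sum_eq_single i₀]
      · simp
      · intro b hb hne
        rw [Polynomial.coeff_C_mul, Polynomial.coeff_X_pow, if_neg, mul_zero]
        intro heq
        have h1 := hle b hb
        have h2 := hle i₀ hi₀s
        omega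
      · intro h; exact absurd hi₀s h
    rw [h0] at this
    simpa using this.symm
  · -- coefficients of Q * mk α vanish for m ≥ N
    have hcoeff : ∀ m, N ≤ m → (PowerSeries.coeff m) ((Q : PowerSeries k) * PowerSeries.mk α) = 0 := by
      intro m hm
      have : ((Q : PowerSeries k) * PowerSeries.mk α) =
          ∑ i ∈ s, (PowerSeries.C (g i)) * (PowerSeries.X ^ (N - i) * PowerSeries.mk α) := by
        rw [hQ, ← Polynomial.coeToPowerSeries.ringHom_apply, map_sum, Finset.sum_mul]
        apply Finset.sum_congr rfl
        intro i _
        simp only [map_mul, map_pow, Polynomial.coeToPowerSeries.ringHom_apply,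
          Polynomial.coe_C, Polynomial.coe_X]
        ring
      rw [this, map_sum]
      rw [← hrec (m - N)]
      apply Finset.sum_congr rfl
      intro i hi
      rw [PowerSeries.coeff_C_mul, PowerSeries.coeff_X_pow_mul']
      rw [if_pos (by omega : N - i ≤ m)]
      rw [PowerSeries.coeff_mk]
      have := hle i hi
      congr 2
      omega
    refine ⟨((Q : PowerSeries k) * PowerSeries.mk α).trunc (N + 1), ?_⟩
    ext m
    rw [Polynomial.coeff_coe, PowerSeries.coeff_trunc]
    split_ifs with h
    · rfl
    · exact hcoeff m (by omega)
end
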